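/- Let F : Ω ⇉ ℝ^d be a set-valued mapping such that F(ω) is convex with nonempty interior for every ω. If {ω : x ∈ F(ω)} ∈ H for every x ∈ ℝ^d, then F is H-measurable, i.e. {ω : F(ω) ∩ V ≠ ∅} ∈ H for every open V ⊆ ℝ^d. -/

import Mathlib

open MeasureTheory

lemma aux_subset_closure_interior {E : Type*} [AddCommGroup E] [Module ℝ E]
    [TopologicalSpace E] [IsTopologicalAddGroup E] [ContinuousSMul ℝ E]
    {s : Set E} (hs : Convex ℝ s) (h : (interior s).Nonempty) :
    s ⊆ closure (interior s) := by
  obtain ⟨y, hy⟩ := h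
  intro x hxs
  have htend : Filter.Tendsto (fun t : ℝ => x + t • (y - x)) (nhdsWithin 0 (Set.Ioi 0))
      (nhds x) := by
    have hc : Continuous (fun t : ℝ => x + t • (y - x)) := by
      continuity
    have := hc.tendsto 0
    simp only [zero_smul, add_zero] at this
    exact this.mono_left nhdsWithin_le_nhds
  refine mem_closure_of_tendsto htend ?_
  filter_upwards [Ioo_mem_nhdsGT one_pos, self_mem_nhdsWithin] with t ht ht0
  exact hs.add_smul_sub_mem_interior hxs hy ⟨ht0, ht.2.le⟩

theorem stmt_9 {Ω : Type*} (d : ℕ) (H : MeasurableSpace Ω)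
    (F : Ω → Set (EuclideanSpace ℝ (Fin d)))
    (hconv : ∀ ω, Convex ℝ (F ω))
    (hint : ∀ ω, (interior (F ω)).Nonempty)
    (hx : ∀ x : EuclideanSpace ℝ (Fin d), MeasurableSet[H] {ω | x ∈ F ω}) :
    ∀ V : Set (EuclideanSpace ℝ (Fin d)), IsOpen V →
      MeasurableSet[H] {ω | (F ω ∩ V).Nonempty} := by
  intro V hV
  obtain ⟨D, Dcount, Ddense⟩ := TopologicalSpace.exists_countable_dense
    (EuclideanSpace ℝ (Fin d))
  have heq : {ω | (F ω ∩ V).Nonempty} = ⋃ q ∈ D ∩ V, {ω | q ∈ F ω} := by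
    ext ω
    simp only [Set.mem_setOf_eq, Set.mem_iUnion, exists_prop]
    constructor
    · rintro ⟨x, hxF, hxV⟩
      have hxcl : x ∈ closure (interior (F ω)) :=
        aux_subset_closure_interior (hconv ω) (hint ω) hxF
      have hopen : IsOpen (V ∩ interior (F ω)) := hV.inter isOpen_interior
      have hne : (V ∩ interior (F ω)).Nonempty := by
        rcases mem_closure_iff.1 hxcl V hV hxV with ⟨z, hz⟩
        exact ⟨z, hz⟩
      rcases Ddense.exists_mem_open hopen hne with ⟨q, hqD, hqV, hqint⟩
      exact ⟨q, ⟨hqD, hqV⟩, interior_subset hqint⟩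
    · rintro ⟨q, ⟨_, hqV⟩, hqF⟩
      exact ⟨q, hqF, hqV⟩
  rw [heq]
  exact MeasurableSet.biUnion (Dcount.mono Set.inter_subset_left) fun q _ => hx q
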